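/- Let d, m ∈ ℕ, x, y ∈ ℝ^d, L, T ∈ [0,∞), δ ∈ (0,∞), p ∈ [2,∞), B ∈ ℝ^{d×m}, let (Ω, F, P) be a probability space, let W : [0,T] × Ω → ℝ^m be a standard Brownian motion, let μ : ℝ^d → ℝ^d be L-Lipschitz, let X, Y : [0,T] × Ω → ℝ^d be continuous stochastic processes, and let a : [0,T] × Ω → ℝ^d be jointly measurable with ∫_0^t ‖a_s‖ ds < ∞, Y_t = y + ∫_0^t a_s ds + B W_t, and X_t = x + ∫_0^t μ(X_s) ds + B W_t for all t ∈ [0,T]. Then for all t ∈ [0,T], (E[‖X_t − Y_t‖^p])^(1/p) ≤ exp((L + (1 − 1/p)/δ) t) (‖x − y‖ + δ^(1 − 1/p) (∫_0^t E[‖a_s − μ(Y_s)‖^p] ds)^(1/p)). -/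

import Mathlib

open MeasureTheory ProbabilityTheory
open scoped ENNReal NNReal

/-- A standard Brownian motion with values in `ℝ^m` on the time interval `[0,T]`. -/
structure IsStdBrownianMotion {Ω : Type*} [MeasurableSpace Ω] (P : Measure Ω)
    (m : ℕ) (T : ℝ) (W : ℝ → Ω → (Fin m → ℝ)) : Prop where
  measurable : ∀ t, Measurable (W t)
  init : ∀ ω, W 0 ω = 0
  cont : ∀ ω, ContinuousOn (fun t => W t ω) (Set.Icc 0 T)
  incr_gaussian : ∀ s t : ℝ, 0 ≤ s → s ≤ t → t ≤ T → ∀ i : Fin m,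
    P.map (fun ω => W t ω i - W s ω i) = gaussianReal 0 (Real.toNNReal (t - s))
  indep_incr : ∀ (n : ℕ) (τ : ℕ → ℝ), Monotone τ → (∀ k, τ k ∈ Set.Icc (0:ℝ) T) →
    iIndepFun
      (fun q : Fin n × Fin m => fun ω => W (τ (q.1 + 1)) ω q.2 - W (τ q.1) ω q.2) P

/-- Strong `L^p` perturbation estimate for SDEs with additive noise
(Proposition 4.3): with `X_t = x + ∫_0^t μ(X_s) ds + B W_t` and
`Y_t = y + ∫_0^t a_s ds + B W_t`, it holds for `t ∈ [0,T]` that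
`(E[‖X_t − Y_t‖^p])^(1/p) ≤ exp((L + (1 − 1/p)/δ) t) (‖x − y‖ +
δ^(1 − 1/p) (∫_0^t E[‖a_s − μ(Y_s)‖^p] ds)^(1/p))`. -/
theorem sde_strong_perturbation {Ω : Type*} [MeasurableSpace Ω] (P : Measure Ω)
    [IsProbabilityMeasure P] (d m : ℕ) (x y : EuclideanSpace ℝ (Fin d))
    (L T : ℝ) (hL : 0 ≤ L) (hT : 0 ≤ T) (δ : ℝ) (hδ : 0 < δ) (p : ℝ) (hp : 2 ≤ p)
    (B : Matrix (Fin d) (Fin m) ℝ) (W : ℝ → Ω → (Fin m → ℝ))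
    (hW : IsStdBrownianMotion P m T W)
    (μd : EuclideanSpace ℝ (Fin d) → EuclideanSpace ℝ (Fin d))
    (hμ : ∀ v w, ‖μd v - μd w‖ ≤ L * ‖v - w‖)
    (X Y : ℝ → Ω → EuclideanSpace ℝ (Fin d))
    (hXcont : ∀ ω, ContinuousOn (fun t => X t ω) (Set.Icc 0 T))
    (hYcont : ∀ ω, ContinuousOn (fun t => Y t ω) (Set.Icc 0 T))
    (a : ℝ → Ω → EuclideanSpace ℝ (Fin d))
    (hameas : Measurable (Function.uncurry a))
    (haInt : ∀ ω, ∀ t ∈ Set.Icc (0:ℝ) T,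
      IntervalIntegrable (fun s => a s ω) MeasureTheory.volume 0 t)
    (hY : ∀ t ∈ Set.Icc (0:ℝ) T, ∀ ω,
      Y t ω = y + (∫ s in (0:ℝ)..t, a s ω)
        + (EuclideanSpace.equiv (Fin d) ℝ).symm (B.mulVec (W t ω)))
    (hX : ∀ t ∈ Set.Icc (0:ℝ) T, ∀ ω,
      X t ω = x + (∫ s in (0:ℝ)..t, μd (X s ω))
        + (EuclideanSpace.equiv (Fin d) ℝ).symm (B.mulVec (W t ω))) :
    ∀ t ∈ Set.Icc (0:ℝ) T,
      (∫⁻ ω, (‖X t ω - Y t ω‖₊ : ℝ≥0∞) ^ p ∂P) ^ (1 / p)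
        ≤ ENNReal.ofReal (Real.exp ((L + (1 - 1 / p) / δ) * t)) *
          (ENNReal.ofReal ‖x - y‖ +
            ENNReal.ofReal (δ ^ (1 - 1 / p)) *
              (∫⁻ s in Set.Ioc (0:ℝ) t,
                ∫⁻ ω, (‖a s ω - μd (Y s ω)‖₊ : ℝ≥0∞) ^ p ∂P) ^ (1 / p)) := by
  intro t ht
  obtain ⟨ht0, htT⟩ := ht
  have hp1 : (1:ℝ) < p := lt_of_lt_of_le one_lt_two hp
  have hp0 : (0:ℝ) < p := lt_trans one_pos hp1
  have hβ0 : 0 ≤ 1 - 1/p := by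
    have : 1/p ≤ 1 := by
      rw [div_le_one hp0]; exact hp1.le
    linarith
  -- continuity of the drift
  have hμd_cont : Continuous μd := by
    have : LipschitzWith (Real.toNNReal L) μd := by
      apply LipschitzWith.of_dist_le_mul
      intro v w
      rw [dist_eq_norm, dist_eq_norm]
      calc ‖μd v - μd w‖ ≤ L * ‖v - w‖ := hμ v w
        _ = (Real.toNNReal L : ℝ) * ‖v - w‖ := by rw [Real.coe_toNNReal L hL]
    exact this.continuous
  -- clamp to [0,T]
  set c : ℝ → ℝ := fun s => max 0 (min s T) with hc_def
  have hc_cont : Continuous c := continuous_const.max (continuous_id.min continuous_const)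
  have hc_mem : ∀ s, c s ∈ Set.Icc (0:ℝ) T := by
    intro s
    constructor
    · exact le_max_left _ _
    · exact max_le hT (min_le_right _ _)
  have hc_eq : ∀ s ∈ Set.Icc (0:ℝ) T, c s = s := by
    intro s hs
    simp only [hc_def]
    rw [min_eq_left hs.2, max_eq_right hs.1]
  -- measurability of Y at fixed times
  have hBW : ∀ s, Measurable fun ω => (EuclideanSpace.equiv (Fin d) ℝ).symm (B.mulVec (W s ω)) := by
    intro s
    have h1 : Continuous fun v : Fin m → ℝ => (EuclideanSpace.equiv (Fin d) ℝ).symm (B.mulVec v) := by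
      have h2 : Continuous fun v : Fin m → ℝ => B.mulVec v := by
        have := (Matrix.mulVecLin B).continuous_of_finiteDimensional
        exact this
      exact ((EuclideanSpace.equiv (Fin d) ℝ).symm.continuous).comp h2
    exact h1.measurable.comp (hW.measurable s)
  have haInt' : ∀ ω, ∀ s ∈ Set.Icc (0:ℝ) T, IntegrableOn (fun r => a r ω) (Set.Ioc 0 s) := by
    intro ω s hs
    rw [← intervalIntegrable_iff_integrableOn_Ioc_of_le hs.1]
    exact haInt ω s hs
  have hYmeas : ∀ s ∈ Set.Icc (0:ℝ) T, Measurable (fun ω => Y s ω) := by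
    intro s hs
    have h1 : Measurable fun ω => ∫ r in (0:ℝ)..s, a r ω := by
      have h2 : Measurable fun ω => ∫ r in Set.Ioc (0:ℝ) s, a r ω := by
        have := (hameas.stronglyMeasurable).integral_prod_left
          (μ := volume.restrict (Set.Ioc (0:ℝ) s))
        exact this.measurable
      have h3 : (fun ω => ∫ r in (0:ℝ)..s, a r ω)
          = fun ω => ∫ r in Set.Ioc (0:ℝ) s, a r ω := by
        funext ω; rw [intervalIntegral.integral_of_le hs.1]
      rw [h3]; exact h2
    have h4 : (fun ω => Y s ω) = fun ω =>
        y + (∫ r in (0:ℝ)..s, a r ω)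
          + (EuclideanSpace.equiv (Fin d) ℝ).symm (B.mulVec (W s ω)) := funext (hY s hs)
    rw [h4]
    exact (measurable_const.add h1).add (hBW s)
  -- clamped Y and clamped g
  set Ycl : ℝ → Ω → EuclideanSpace ℝ (Fin d) := fun s ω => Y (c s) ω with hYcl_def
  have hYcl_cont : ∀ ω, Continuous fun s => Ycl s ω := by
    intro ω
    exact (hYcont ω).comp_continuous hc_cont hc_mem
  have hYclmeas : Measurable (Function.uncurry Ycl) :=
    measurable_uncurry_of_continuous_of_measurable hYcl_cont
      (fun s => hYmeas (c s) (hc_mem s))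
  set gc : ℝ → Ω → ℝ := fun s ω => ‖a s ω - μd (Ycl s ω)‖ with hgc_def
  have hgcmeas : Measurable (Function.uncurry gc) := by
    have h1 : Function.uncurry gc
        = fun q : ℝ × Ω => ‖Function.uncurry a q - μd (Function.uncurry Ycl q)‖ := rfl
    rw [h1]
    exact (hameas.sub ((hμd_cont.measurable).comp hYclmeas)).norm
  have hgc_nonneg : ∀ s ω, 0 ≤ gc s ω := fun s ω => norm_nonneg _
  -- integrability of gc in s, for each ω
  have hμYcl_cont : ∀ ω, Continuous fun s => μd (Ycl s ω) := fun ω =>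
    hμd_cont.comp (hYcl_cont ω)
  have hgc_int : ∀ ω, ∀ s ∈ Set.Icc (0:ℝ) T,
      IntervalIntegrable (fun r => gc r ω) volume 0 s := by
    intro ω s hs
    exact ((haInt ω s hs).sub ((hμYcl_cont ω).intervalIntegrable 0 s)).norm
  -- pathwise Gronwall estimate

  have key : ∀ ω, ‖X t ω - Y t ω‖
      ≤ Real.exp (L*t) * (‖x - y‖ + ∫ s in (0:ℝ)..t, gc s ω) := by
    intro ω
    set K := ‖x - y‖ + ∫ s in (0:ℝ)..t, gc s ω with hK_def
    have hG_nonneg : 0 ≤ ∫ s in (0:ℝ)..t, gc s ω :=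
      intervalIntegral.integral_nonneg ht0 (fun r _ => hgc_nonneg r ω)
    have hK0 : 0 ≤ K := add_nonneg (norm_nonneg _) hG_nonneg
    set u : ℝ → ℝ := fun r => ‖X (c r) ω - Y (c r) ω‖ with hu_def
    have hXc : Continuous fun r => X (c r) ω := (hXcont ω).comp_continuous hc_cont hc_mem
    have hu_cont : Continuous u := (hXc.sub (hYcl_cont ω)).norm
    have hu_nonneg : ∀ r, 0 ≤ u r := fun r => norm_nonneg _
    set v : ℝ → ℝ := fun s => ∫ r in (0:ℝ)..s, u r with hv_def
    have hv_deriv : ∀ s, HasDerivAt v (u s) s := fun s =>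
      (hu_cont.integral_hasStrictDerivAt 0 s).hasDerivAt
    have hv_nonneg : ∀ s, 0 ≤ s → 0 ≤ v s := fun s hs =>
      intervalIntegral.integral_nonneg hs (fun r _ => hu_nonneg r)
    have hu_eq : ∀ s ∈ Set.Icc (0:ℝ) T, u s = ‖X s ω - Y s ω‖ := by
      intro s hs
      simp only [hu_def, hc_eq s hs]
    have hub : ∀ s ∈ Set.Icc (0:ℝ) t, u s ≤ K + L * v s := by
      intro s hs
      have hsT : s ∈ Set.Icc (0:ℝ) T := ⟨hs.1, le_trans hs.2 htT⟩
      have hμX_int : IntervalIntegrable (fun r => μd (X r ω)) volume 0 s := by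
        apply ContinuousOn.intervalIntegrable
        rw [Set.uIcc_of_le hs.1]
        exact hμd_cont.comp_continuousOn
          ((hXcont ω).mono (Set.Icc_subset_Icc le_rfl hsT.2))
      have ha_int := haInt ω s hsT
      have hZ : X s ω - Y s ω = (x - y) + ∫ r in (0:ℝ)..s, (μd (X r ω) - a r ω) := by
        rw [hX s hsT ω, hY s hsT ω, intervalIntegral.integral_sub hμX_int ha_int]
        abel
      have h2 : ‖X s ω - Y s ω‖ ≤ ‖x - y‖ + ∫ r in (0:ℝ)..s, ‖μd (X r ω) - a r ω‖ := by
        rw [hZ]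
        exact (norm_add_le _ _).trans (add_le_add_right
          (intervalIntegral.norm_integral_le_integral_norm hs.1) _)
      have h3 : ∫ r in (0:ℝ)..s, ‖μd (X r ω) - a r ω‖
          ≤ ∫ r in (0:ℝ)..s, (L * u r + gc r ω) := by
        apply intervalIntegral.integral_mono_on hs.1 (hμX_int.sub ha_int).norm
          (((continuous_const.mul hu_cont).intervalIntegrable 0 s).add (hgc_int ω s hsT))
        intro r hr
        have hrT : r ∈ Set.Icc (0:ℝ) T := ⟨hr.1, le_trans hr.2 hsT.2⟩
        have htri : ‖μd (X r ω) - a r ω‖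
            ≤ ‖μd (X r ω) - μd (Y r ω)‖ + ‖μd (Y r ω) - a r ω‖ :=
          norm_sub_le_norm_sub_add_norm_sub _ _ _
        have hlip := hμ (X r ω) (Y r ω)
        have hgr : ‖μd (Y r ω) - a r ω‖ = gc r ω := by
          simp only [hgc_def, hYcl_def, hc_eq r hrT]
          rw [norm_sub_rev]
        have hur : ‖X r ω - Y r ω‖ = u r := (hu_eq r hrT).symm
        calc ‖μd (X r ω) - a r ω‖
            ≤ ‖μd (X r ω) - μd (Y r ω)‖ + ‖μd (Y r ω) - a r ω‖ := htri
          _ ≤ L * ‖X r ω - Y r ω‖ + gc r ω := by rw [hgr]; exact add_le_add_left hlip _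
          _ = L * u r + gc r ω := by rw [hur]
      have h4 : ∫ r in (0:ℝ)..s, (L * u r + gc r ω)
          = L * v s + ∫ r in (0:ℝ)..s, gc r ω := by
        rw [intervalIntegral.integral_add (f := fun r => L * u r) ((continuous_const.mul hu_cont).intervalIntegrable 0 s)
          (hgc_int ω s hsT), intervalIntegral.integral_const_mul]
      have h5 : ∫ r in (0:ℝ)..s, gc r ω ≤ ∫ r in (0:ℝ)..t, gc r ω := by
        apply intervalIntegral.integral_mono_interval le_rfl hs.1 hs.2
        · filter_upwards with r using hgc_nonneg r ω
        · exact hgc_int ω t ⟨ht0, htT⟩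
      have h1 : u s = ‖X s ω - Y s ω‖ := hu_eq s hsT
      rw [h1, hK_def]
      linarith
    have hv_cont : ContinuousOn v (Set.Icc 0 t) :=
      (continuous_iff_continuousAt.mpr fun s => (hv_deriv s).continuousAt).continuousOn
    have hgron := norm_le_gronwallBound_of_norm_deriv_right_le (f := v) (f' := u)
      (δ := 0) (K := L) (ε := K) (a := 0) (b := t) hv_cont
      (fun r _ => (hv_deriv r).hasDerivWithinAt)
      (by simp [hv_def])
      (fun r hr => by
        rw [Real.norm_of_nonneg (hu_nonneg r), Real.norm_of_nonneg (hv_nonneg r hr.1)]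
        have := hub r ⟨hr.1, hr.2.le⟩
        linarith)
    have hvt := hgron t ⟨ht0, le_rfl⟩
    rw [Real.norm_of_nonneg (hv_nonneg t ht0), sub_zero] at hvt
    have hut : u t ≤ K + L * v t := hub t ⟨ht0, le_rfl⟩
    have hfinal : u t ≤ K * Real.exp (L * t) := by
      rcases eq_or_lt_of_le hL with hL0 | hL0
      · rw [← hL0] at hut ⊢
        simp only [zero_mul, Real.exp_zero, mul_one] at hut ⊢
        linarith
      · rw [gronwallBound_of_K_ne_0 hL0.ne'] at hvt
        have h6 := mul_le_mul_of_nonneg_left hvt hL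
        have h7 : L * (0 * Real.exp (L * t) + K / L * (Real.exp (L * t) - 1))
            = K * (Real.exp (L * t) - 1) := by
          field_simp
          ring
        rw [h7] at h6
        linarith
    have h8 : ‖X t ω - Y t ω‖ = u t := (hu_eq t ⟨ht0, htT⟩).symm
    rw [h8, hK_def] at *
    calc u t ≤ K * Real.exp (L * t) := hfinal
      _ = Real.exp (L * t) * (‖x - y‖ + ∫ s in (0:ℝ)..t, gc s ω) := by rw [hK_def]; ring

  -- notation for the main estimate
  set C := ‖x - y‖ with hC_def
  set I : Ω → ℝ := fun ω => ∫ s in (0:ℝ)..t, gc s ω with hI_def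
  have hI_nonneg : ∀ ω, 0 ≤ I ω := fun ω =>
    intervalIntegral.integral_nonneg ht0 (fun r _ => hgc_nonneg r ω)
  have hImeas : Measurable I := by
    have h2 : Measurable fun ω => ∫ s in Set.Ioc (0:ℝ) t, gc s ω :=
      ((hgcmeas.stronglyMeasurable).integral_prod_left
        (μ := volume.restrict (Set.Ioc (0:ℝ) t))).measurable
    have h3 : I = fun ω => ∫ s in Set.Ioc (0:ℝ) t, gc s ω := by
      funext ω
      rw [hI_def]
      simp only
      rw [intervalIntegral.integral_of_le ht0]
    rw [h3]; exact h2
  set S := ∫⁻ s in Set.Ioc (0:ℝ) t,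
      ∫⁻ ω, (‖a s ω - μd (Y s ω)‖₊ : ℝ≥0∞) ^ p ∂P with hS_def
  have hScl : (∫⁻ s in Set.Ioc (0:ℝ) t, ∫⁻ ω, ENNReal.ofReal (gc s ω) ^ p ∂P) = S := by
    rw [hS_def]
    apply setLIntegral_congr_fun measurableSet_Ioc
    intro s hs
    beta_reduce
    have hsT : s ∈ Set.Icc (0:ℝ) T := ⟨hs.1.le, le_trans hs.2 htT⟩
    congr 1
    funext ω
    congr 1
    rw [← ENNReal.ofReal_coe_nnreal, coe_nnnorm]
    congr 1
    simp only [hgc_def, hYcl_def, hc_eq s hsT]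
  -- Step A : pointwise pathwise bound inside the integral
  have stepA : (∫⁻ ω, (‖X t ω - Y t ω‖₊ : ℝ≥0∞) ^ p ∂P) ^ (1/p)
      ≤ (∫⁻ ω, (ENNReal.ofReal (Real.exp (L*t))
          * (ENNReal.ofReal C + ENNReal.ofReal (I ω))) ^ p ∂P) ^ (1/p) := by
    apply ENNReal.rpow_le_rpow _ (by positivity)
    apply lintegral_mono
    intro ω
    apply ENNReal.rpow_le_rpow _ hp0.le
    rw [← ENNReal.ofReal_add (norm_nonneg _) (hI_nonneg ω),
      ← ENNReal.ofReal_mul (Real.exp_nonneg _), ← ENNReal.ofReal_coe_nnreal, coe_nnnorm]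
    exact ENNReal.ofReal_le_ofReal (key ω)
  -- Step B : pull out the constant
  have hc0top : ENNReal.ofReal (Real.exp (L*t)) ≠ ⊤ := ENNReal.ofReal_ne_top
  have stepB : (∫⁻ ω, (ENNReal.ofReal (Real.exp (L*t))
        * (ENNReal.ofReal C + ENNReal.ofReal (I ω))) ^ p ∂P) ^ (1/p)
      = ENNReal.ofReal (Real.exp (L*t))
        * (∫⁻ ω, (ENNReal.ofReal C + ENNReal.ofReal (I ω)) ^ p ∂P) ^ (1/p) := by
    simp_rw [ENNReal.mul_rpow_of_nonneg _ _ hp0.le]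
    rw [lintegral_const_mul' _ _ (ENNReal.rpow_ne_top_of_nonneg hp0.le hc0top),
      ENNReal.mul_rpow_of_nonneg _ _ (by positivity), ← ENNReal.rpow_mul,
      mul_one_div_cancel hp0.ne', ENNReal.rpow_one]
  -- Step C : Minkowski inequality
  have stepC : (∫⁻ ω, (ENNReal.ofReal C + ENNReal.ofReal (I ω)) ^ p ∂P) ^ (1/p)
      ≤ ENNReal.ofReal C + (∫⁻ ω, ENNReal.ofReal (I ω) ^ p ∂P) ^ (1/p) := by
    have hmink := ENNReal.lintegral_Lp_add_le (μ := P)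
      (f := fun _ => ENNReal.ofReal C) (g := fun ω => ENNReal.ofReal (I ω))
      aemeasurable_const hImeas.ennreal_ofReal.aemeasurable hp1.le
    simp only [Pi.add_apply] at hmink
    have hconst : (∫⁻ _ω : Ω, (ENNReal.ofReal C) ^ p ∂P) ^ (1/p) = ENNReal.ofReal C := by
      rw [lintegral_const, measure_univ, mul_one, ← ENNReal.rpow_mul,
        mul_one_div_cancel hp0.ne', ENNReal.rpow_one]
    rw [hconst] at hmink
    exact hmink
  -- rewrite ofReal (I ω) as a lintegral
  have hIeq : ∀ ω, ENNReal.ofReal (I ω)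
      = ∫⁻ s in Set.Ioc (0:ℝ) t, ENNReal.ofReal (gc s ω) := by
    intro ω
    rw [hI_def]
    simp only
    rw [intervalIntegral.integral_of_le ht0]
    rw [ofReal_integral_eq_lintegral_ofReal
      ((intervalIntegrable_iff_integrableOn_Ioc_of_le ht0).mp (hgc_int ω t ⟨ht0, htT⟩))
      (by filter_upwards with s using hgc_nonneg s ω)]
  -- Hölder pathwise (in s)
  set q := p / (p - 1) with hq_def
  have hpq : p.HolderConjugate q := Real.HolderConjugate.conjExponent hp1
  have hqinv : 1/q = 1 - 1/p := by
    rw [one_div, ← hpq.one_sub_inv, one_div]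
  have holder : ∀ ω, (∫⁻ s in Set.Ioc (0:ℝ) t, ENNReal.ofReal (gc s ω))
      ≤ (∫⁻ s in Set.Ioc (0:ℝ) t, ENNReal.ofReal (gc s ω) ^ p) ^ (1/p)
        * ENNReal.ofReal t ^ (1 - 1/p) := by
    intro ω
    have hmeasω : AEMeasurable (fun s => ENNReal.ofReal (gc s ω))
        (volume.restrict (Set.Ioc (0:ℝ) t)) := by
      have hcomp : (fun s => ENNReal.ofReal (gc s ω))
          = (fun z : ℝ × Ω => ENNReal.ofReal (Function.uncurry gc z)) ∘ (fun s => (s, ω)) := rfl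
      rw [hcomp]
      exact ((hgcmeas.ennreal_ofReal).comp (measurable_id.prodMk measurable_const)).aemeasurable
    have hhold := ENNReal.lintegral_mul_le_Lp_mul_Lq (volume.restrict (Set.Ioc (0:ℝ) t)) hpq
      hmeasω (aemeasurable_const (b := (1:ℝ≥0∞)))
    simp only [Pi.mul_apply, mul_one, ENNReal.one_rpow, lintegral_const,
      Measure.restrict_apply, MeasurableSet.univ, Set.univ_inter,
      Real.volume_Ioc, sub_zero, one_mul] at hhold
    rw [hqinv] at hhold
    exact hhold
  -- Step F : take L^p(Ω) norm and swap integrals (Tonelli)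
  have huncurrymeas : AEMeasurable
      (Function.uncurry fun ω s => ENNReal.ofReal (gc s ω) ^ p)
      (P.prod (volume.restrict (Set.Ioc (0:ℝ) t))) := by
    have h1 : (Function.uncurry fun ω s => ENNReal.ofReal (gc s ω) ^ p)
        = (fun z : ℝ × Ω => ENNReal.ofReal (Function.uncurry gc z) ^ p) ∘ Prod.swap := rfl
    rw [h1]
    exact (((ENNReal.continuous_rpow_const.measurable).comp
      (hgcmeas.ennreal_ofReal)).comp measurable_swap).aemeasurable
  have hrtop : (ENNReal.ofReal t ^ (1 - 1/p)) ^ p ≠ ⊤ :=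
    ENNReal.rpow_ne_top_of_nonneg hp0.le
      (ENNReal.rpow_ne_top_of_nonneg hβ0 ENNReal.ofReal_ne_top)
  have stepF : (∫⁻ ω, ENNReal.ofReal (I ω) ^ p ∂P) ^ (1/p)
      ≤ S ^ (1/p) * ENNReal.ofReal t ^ (1 - 1/p) := by
    have h1 : ∀ ω, ENNReal.ofReal (I ω) ^ p
        ≤ (∫⁻ s in Set.Ioc (0:ℝ) t, ENNReal.ofReal (gc s ω) ^ p)
          * (ENNReal.ofReal t ^ (1 - 1/p)) ^ p := by
      intro ω
      rw [hIeq ω]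
      calc (∫⁻ s in Set.Ioc (0:ℝ) t, ENNReal.ofReal (gc s ω)) ^ p
          ≤ ((∫⁻ s in Set.Ioc (0:ℝ) t, ENNReal.ofReal (gc s ω) ^ p) ^ (1/p)
            * ENNReal.ofReal t ^ (1 - 1/p)) ^ p := ENNReal.rpow_le_rpow (holder ω) hp0.le
        _ = (∫⁻ s in Set.Ioc (0:ℝ) t, ENNReal.ofReal (gc s ω) ^ p)
            * (ENNReal.ofReal t ^ (1 - 1/p)) ^ p := by
            rw [ENNReal.mul_rpow_of_nonneg _ _ hp0.le, ← ENNReal.rpow_mul,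
              one_div_mul_cancel hp0.ne', ENNReal.rpow_one]
    have h2 : (∫⁻ ω, ENNReal.ofReal (I ω) ^ p ∂P)
        ≤ S * (ENNReal.ofReal t ^ (1 - 1/p)) ^ p := by
      calc (∫⁻ ω, ENNReal.ofReal (I ω) ^ p ∂P)
          ≤ ∫⁻ ω, (∫⁻ s in Set.Ioc (0:ℝ) t, ENNReal.ofReal (gc s ω) ^ p)
              * (ENNReal.ofReal t ^ (1 - 1/p)) ^ p ∂P := lintegral_mono h1
        _ = (∫⁻ ω, (∫⁻ s in Set.Ioc (0:ℝ) t, ENNReal.ofReal (gc s ω) ^ p) ∂P)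
              * (ENNReal.ofReal t ^ (1 - 1/p)) ^ p := by
            rw [lintegral_mul_const' _ _ hrtop]
        _ = (∫⁻ s in Set.Ioc (0:ℝ) t, ∫⁻ ω, ENNReal.ofReal (gc s ω) ^ p ∂P)
              * (ENNReal.ofReal t ^ (1 - 1/p)) ^ p := by
            rw [lintegral_lintegral_swap huncurrymeas]
        _ = S * (ENNReal.ofReal t ^ (1 - 1/p)) ^ p := by rw [hScl]
    calc (∫⁻ ω, ENNReal.ofReal (I ω) ^ p ∂P) ^ (1/p)
        ≤ (S * (ENNReal.ofReal t ^ (1 - 1/p)) ^ p) ^ (1/p) :=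
          ENNReal.rpow_le_rpow h2 (by positivity)
      _ = S ^ (1/p) * ENNReal.ofReal t ^ (1 - 1/p) := by
          rw [ENNReal.mul_rpow_of_nonneg _ _ (by positivity), ← ENNReal.rpow_mul,
            mul_one_div_cancel hp0.ne', ENNReal.rpow_one]
  -- Step G : compare constants
  have texp : ENNReal.ofReal t ^ (1 - 1/p)
      ≤ ENNReal.ofReal (δ ^ (1 - 1/p) * Real.exp ((1 - 1/p)/δ * t)) := by
    rw [ENNReal.ofReal_rpow_of_nonneg ht0 hβ0]
    apply ENNReal.ofReal_le_ofReal
    have h2 : t/δ ≤ Real.exp (t/δ) := by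
      have := Real.add_one_le_exp (t/δ)
      linarith
    have h1 : t ≤ δ * Real.exp (t/δ) := by
      have h3 : δ * (t/δ) ≤ δ * Real.exp (t/δ) := mul_le_mul_of_nonneg_left h2 hδ.le
      calc t = δ * (t/δ) := by field_simp
        _ ≤ δ * Real.exp (t/δ) := h3
    calc t ^ (1 - 1/p) ≤ (δ * Real.exp (t/δ)) ^ (1 - 1/p) :=
        Real.rpow_le_rpow ht0 h1 hβ0
      _ = δ ^ (1 - 1/p) * Real.exp (t/δ) ^ (1 - 1/p) :=
        Real.mul_rpow hδ.le (Real.exp_nonneg _)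
      _ = δ ^ (1 - 1/p) * Real.exp ((1 - 1/p)/δ * t) := by
        rw [← Real.exp_mul]
        congr 2
        ring
  have hreal : Real.exp (L*t) * (δ ^ (1 - 1/p) * Real.exp ((1 - 1/p)/δ * t))
      = Real.exp ((L + (1 - 1/p)/δ) * t) * δ ^ (1 - 1/p) := by
    rw [show (L + (1 - 1/p)/δ) * t = L*t + (1 - 1/p)/δ * t by ring, Real.exp_add]
    ring
  have final : ENNReal.ofReal (Real.exp (L*t))
        * (ENNReal.ofReal C + S ^ (1/p) * ENNReal.ofReal t ^ (1 - 1/p))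
      ≤ ENNReal.ofReal (Real.exp ((L + (1 - 1/p)/δ) * t))
        * (ENNReal.ofReal C + ENNReal.ofReal (δ ^ (1 - 1/p)) * S ^ (1/p)) := by
    rw [mul_add, mul_add]
    apply add_le_add
    · apply mul_le_mul' _ le_rfl
      apply ENNReal.ofReal_le_ofReal
      apply Real.exp_le_exp.mpr
      nlinarith [div_nonneg hβ0 hδ.le]
    · calc ENNReal.ofReal (Real.exp (L*t)) * (S ^ (1/p) * ENNReal.ofReal t ^ (1 - 1/p))
          ≤ ENNReal.ofReal (Real.exp (L*t)) * (S ^ (1/p)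
            * ENNReal.ofReal (δ ^ (1 - 1/p) * Real.exp ((1 - 1/p)/δ * t))) :=
            mul_le_mul' le_rfl (mul_le_mul' le_rfl texp)
        _ = (ENNReal.ofReal (Real.exp (L*t))
              * ENNReal.ofReal (δ ^ (1 - 1/p) * Real.exp ((1 - 1/p)/δ * t))) * S ^ (1/p) := by
            ring
        _ = ENNReal.ofReal (Real.exp ((L + (1 - 1/p)/δ) * t))
              * (ENNReal.ofReal (δ ^ (1 - 1/p)) * S ^ (1/p)) := by
            rw [← ENNReal.ofReal_mul (Real.exp_nonneg _), hreal,
              ENNReal.ofReal_mul (Real.exp_nonneg _)]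
            ring
  -- assemble
  calc (∫⁻ ω, (‖X t ω - Y t ω‖₊ : ℝ≥0∞) ^ p ∂P) ^ (1/p)
      ≤ (∫⁻ ω, (ENNReal.ofReal (Real.exp (L*t))
          * (ENNReal.ofReal C + ENNReal.ofReal (I ω))) ^ p ∂P) ^ (1/p) := stepA
    _ = ENNReal.ofReal (Real.exp (L*t))
          * (∫⁻ ω, (ENNReal.ofReal C + ENNReal.ofReal (I ω)) ^ p ∂P) ^ (1/p) := stepB
    _ ≤ ENNReal.ofReal (Real.exp (L*t))
          * (ENNReal.ofReal C + (∫⁻ ω, ENNReal.ofReal (I ω) ^ p ∂P) ^ (1/p)) :=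
        mul_le_mul' le_rfl stepC
    _ ≤ ENNReal.ofReal (Real.exp (L*t))
          * (ENNReal.ofReal C + S ^ (1/p) * ENNReal.ofReal t ^ (1 - 1/p)) :=
        mul_le_mul' le_rfl (add_le_add le_rfl stepF)
    _ ≤ ENNReal.ofReal (Real.exp ((L + (1 - 1/p)/δ) * t))
          * (ENNReal.ofReal C + ENNReal.ofReal (δ ^ (1 - 1/p)) * S ^ (1/p)) := final
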